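/- For integers 0 ≤ b ≤ a, T(a,b) = Σ_{j=0}^{a−b} (−1)^j · binom(a−b−j, j) · C_{a−j}, evaluated in ℤ, where binom(x,y) = 0 when x < y. -/
import Mathlib


/-- The ballot number `T(n,k) = binom(n+k,k) − binom(n+k,k−1)`, with the
convention that `binom(n+k,k−1) = 0` when `k = 0`. -/
def ballot (n k : ℕ) : ℤ :=
  ((n + k).choose k : ℤ) - if k = 0 then 0 else ((n + k).choose (k - 1) : ℤ)

lemma cat_eq (a : ℕ) (ha : 1 ≤ a) :
    (catalan a : ℤ) = ((2*a).choose a : ℤ) - ((2*a).choose (a-1) : ℤ) := by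
  have h0 : (2*a).choose a * a = (2*a).choose (a-1) * (a+1) := by
    have := Nat.choose_succ_right_eq (2*a) (a-1)
    have h1 : a - 1 + 1 = a := Nat.succ_pred_eq_of_pos ha
    have h2 : 2*a - (a-1) = a + 1 := by omega
    rw [h1, h2] at this
    exact this
  have hc : (a + 1) * catalan a = (2*a).choose a := by
    rw [succ_mul_catalan_eq_centralBinom, Nat.centralBinom]
  have key : ((a:ℤ) + 1) * (catalan a : ℤ)
      = ((a:ℤ)+1) * (((2*a).choose a : ℤ) - ((2*a).choose (a-1) : ℤ)) := by
    have h0' : ((2*a).choose a : ℤ) * a = ((2*a).choose (a-1) : ℤ) * (a+1) := by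
      exact_mod_cast congrArg (Nat.cast : ℕ → ℤ) h0
    have hc' : ((a:ℤ) + 1) * (catalan a : ℤ) = ((2*a).choose a : ℤ) := by
      exact_mod_cast congrArg (Nat.cast : ℕ → ℤ) hc
    rw [hc']; linarith
  have hne : ((a:ℤ) + 1) ≠ 0 := by positivity
  exact mul_left_cancel₀ hne key

lemma ballot_diag (a : ℕ) : ballot a a = catalan a := by
  rcases Nat.eq_zero_or_pos a with h | h
  · subst h; simp [ballot]
  · rw [ballot, if_neg (by omega), cat_eq a h]
    norm_num [two_mul]

lemma ballot_subdiag (a : ℕ) (ha : 1 ≤ a) : ballot a (a-1) = catalan a := by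
  match a, ha with
  | 1, _ => simp [ballot]
  | (n+2), _ =>
    rw [ballot, if_neg (by omega)]
    have e1 : n + 2 + (n + 2 - 1) = 2*n + 3 := by omega
    have e2 : n + 2 - 1 = n + 1 := rfl
    rw [e1, e2, show n + 1 - 1 = n from rfl]
    rw [cat_eq (n+2) (by omega)]
    have e4 : 2 * (n+2) = (2*n+3) + 1 := by ring
    have e5 : n + 2 - 1 = n + 1 := rfl
    rw [e4, e5, Nat.choose_succ_succ (2*n+3) (n+1)]
    have e6 : (2*n+3+1).choose (n+1) = (2*n+3).choose n + (2*n+3).choose (n+1) :=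
      Nat.choose_succ_succ _ _
    rw [e6]
    have e7 : (2*n+3).choose (n+2) = (2*n+3).choose (n+1) := by
      have h := Nat.choose_symm (show n+2 ≤ 2*n+3 by omega)
      rw [show 2*n+3-(n+2) = n+1 by omega] at h
      exact h.symm
    rw [e7]
    push_cast
    ring

lemma ballot_pascal (n k : ℕ) :
    ballot (n+1) (k+1) = ballot (n+1) k + ballot n (k+1) := by
  cases k with
  | zero => simp [ballot, Nat.choose_succ_succ]
  | succ k' =>
    simp only [ballot, if_neg (Nat.succ_ne_zero _), Nat.add_sub_cancel]
    have p1 : (n + 1 + (k' + 1 + 1)).choose (k' + 1 + 1)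
        = (n + k' + 2).choose (k' + 1) + (n + k' + 2).choose (k' + 2) := by
      rw [show n + 1 + (k' + 1 + 1) = (n + k' + 2) + 1 by ring]
      exact Nat.choose_succ_succ _ _
    have p2 : (n + 1 + (k' + 1 + 1)).choose (k' + 1)
        = (n + k' + 2).choose k' + (n + k' + 2).choose (k' + 1) := by
      rw [show n + 1 + (k' + 1 + 1) = (n + k' + 2) + 1 by ring]
      exact Nat.choose_succ_succ _ _
    rw [p1, p2, show n + 1 + (k' + 1) = n + k' + 2 by ring,
      show n + (k' + 1 + 1) = n + k' + 2 by ring,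
      show k' + 1 + 1 = k' + 2 from rfl]
    push_cast
    ring

lemma key_sum (m : ℕ) : ∀ a : ℕ, m ≤ a →
    ballot a (a - m) =
      ∑ j ∈ Finset.range (m + 1),
        (-1 : ℤ) ^ j * ((m - j).choose j : ℤ) * (catalan (a - j) : ℤ) := by
  induction m using Nat.strong_induction_on with
  | _ m ih =>
    match m with
    | 0 =>
      intro a _
      simpa using ballot_diag a
    | 1 =>
      intro a ha
      rw [Finset.sum_range_succ, Finset.sum_range_one]
      simp only [Nat.sub_self, Nat.choose_zero_right]
      norm_num
      exact ballot_subdiag a ha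
    | (m+2) =>
      intro a ha
      -- ballot recurrence
      have hp := ballot_pascal (a-1) (a - (m+2))
      have ea : a - 1 + 1 = a := by omega
      have eb : a - (m+2) + 1 = a - (m+1) := by omega
      have ec : a - 1 - m = a - (m+1) := by omega
      rw [ea, eb] at hp
      have hstep : ballot a (a - (m+2))
          = ballot a (a - (m+1)) - ballot (a-1) (a - 1 - m) := by
        rw [ec]; linarith
      rw [hstep, ih (m+1) (by omega) a (by omega), ih m (by omega) (a-1) (by omega)]
      -- sum gymnastics
      rw [Finset.sum_range_succ' (fun j => (-1:ℤ)^j * ((m+2 - j).choose j : ℤ) * (catalan (a - j) : ℤ)) (m+2)]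
      rw [Finset.sum_range_succ (fun j => (-1:ℤ)^(j+1) * ((m+2 - (j+1)).choose (j+1) : ℤ) * (catalan (a - (j+1)) : ℤ)) (m+1)]
      rw [Finset.sum_range_succ' (fun j => (-1:ℤ)^j * ((m+1 - j).choose j : ℤ) * (catalan (a - j) : ℤ)) (m+1)]
      have hterm : ∀ j ∈ Finset.range (m+1),
          (-1:ℤ)^(j+1) * ((m+2 - (j+1)).choose (j+1) : ℤ) * (catalan (a - (j+1)) : ℤ)
          = (-1:ℤ)^(j+1) * ((m+1 - (j+1)).choose (j+1) : ℤ) * (catalan (a - (j+1)) : ℤ)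
            - (-1:ℤ)^j * ((m - j).choose j : ℤ) * (catalan (a - 1 - j) : ℤ) := by
        intro j hj
        rw [Finset.mem_range] at hj
        have h1 : m + 2 - (j+1) = (m - j) + 1 := by omega
        have h2 : m + 1 - (j+1) = m - j := by omega
        have h3 : a - 1 - j = a - (j+1) := by omega
        rw [h1, h2, h3, Nat.choose_succ_succ (m-j) j]
        push_cast
        ring
      have hs :
          (∑ j ∈ Finset.range (m+1),
            (-1:ℤ)^(j+1) * ((m+2 - (j+1)).choose (j+1) : ℤ) * (catalan (a - (j+1)) : ℤ))
          = ∑ j ∈ Finset.range (m+1),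
            ((-1:ℤ)^(j+1) * ((m+1 - (j+1)).choose (j+1) : ℤ) * (catalan (a - (j+1)) : ℤ)
              - (-1:ℤ)^j * ((m - j).choose j : ℤ) * (catalan (a - 1 - j) : ℤ)) :=
        Finset.sum_congr rfl hterm
      rw [hs, Finset.sum_sub_distrib,
        show m + 2 - (m + 1 + 1) = 0 from by omega,
        Nat.choose_eq_zero_of_lt (show 0 < m + 1 + 1 by omega)]
      simp only [Nat.choose_zero_right]
      push_cast
      ring

/-- For `0 ≤ b ≤ a`,
`T(a,b) = Σ_{j=0}^{a−b} (−1)^j · binom(a−b−j, j) · C_{a−j}` in ℤ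
(where `binom(x,y) = 0` when `x < y`). -/
theorem ballot_eq_alternating_catalan_sum (a b : ℕ) (hb : b ≤ a) :
    ballot a b =
      ∑ j ∈ Finset.range (a - b + 1),
        (-1 : ℤ) ^ j * ((a - b - j).choose j : ℤ) * (catalan (a - j) : ℤ) := by
  have := key_sum (a - b) a (Nat.sub_le a b)
  rwa [Nat.sub_sub_self hb] at this
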